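/- Let θ ≠ 0 be real, let H be the ℝ-linear operator on ℝ[X] given by H(p) = (p(X+θ) − p)/θ, and define the ℝ-linear operator A on ℝ[X] by A(p) = (p(X+θ) − p − θ·p′)/θ², where p(X+θ) is the composition of p with X+θ and p′ its derivative. Then A(1) = 0 and A∘F − F∘A = H; consequently A is the unique ℝ-linear operator with these two properties. -/

import Mathlib

open Polynomial

/-- The operator of multiplication by `X` on `ℝ[X]`. -/
noncomputable def F : Module.End ℝ (Polynomial ℝ) := LinearMap.mulLeft ℝ (X : Polynomial ℝ)

/-- For `θ ≠ 0` and `H(p) = (p(X+θ) − p)/θ`, the operator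
`A(p) = (p(X+θ) − p − θ·p′)/θ²` satisfies `A 1 = 0` and `A∘F − F∘A = H`, and `A` is the
unique operator with these two properties. -/
theorem stmt14 (θ : ℝ) (hθ : θ ≠ 0)
    (H : Module.End ℝ (Polynomial ℝ))
    (hH : ∀ p : Polynomial ℝ, H p = Polynomial.C (1 / θ) * (p.comp (X + Polynomial.C θ) - p))
    (A : Module.End ℝ (Polynomial ℝ))
    (hA : ∀ p : Polynomial ℝ, A p = Polynomial.C (1 / θ ^ 2) *
      (p.comp (X + Polynomial.C θ) - p - Polynomial.C θ * derivative p)) :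
    A 1 = 0 ∧ A * F - F * A = H ∧
      ∀ A' : Module.End ℝ (Polynomial ℝ), A' 1 = 0 → A' * F - F * A' = H → A' = A := by
  have hc : (Polynomial.C (1/θ) : Polynomial ℝ)
      = Polynomial.C θ * Polynomial.C (1/θ^2) := by
    rw [← C_mul]; congr 1; field_simp
  have hA1 : A 1 = 0 := by
    rw [hA]; simp
  have hcomm : A * F - F * A = H := by
    refine LinearMap.ext fun p => ?_
    simp only [LinearMap.sub_apply, Module.End.mul_apply, F, LinearMap.mulLeft_apply,
      hA, hH, derivative_mul, derivative_X, mul_comp, X_comp, one_mul]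
    rw [hc]; ring
  refine ⟨hA1, hcomm, ?_⟩
  intro A' h1 hcomm'
  have key : ∀ (B : Module.End ℝ (Polynomial ℝ)), B * F - F * B = H →
      ∀ q, B (X * q) = X * B q + H q := by
    intro B hB q
    have h := congrArg (fun (T : Module.End ℝ (Polynomial ℝ)) => T q) hB
    simp only [LinearMap.sub_apply, Module.End.mul_apply, F, LinearMap.mulLeft_apply] at h
    rw [← h]; ring
  have hpow : ∀ n : ℕ, A' (X ^ n) = A (X ^ n) := by
    intro n
    induction n with
    | zero => simpa using h1.trans hA1.symm
    | succ n ih =>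
        rw [pow_succ, mul_comm, key A' hcomm' (X ^ n), key A hcomm (X ^ n), ih]
  refine LinearMap.ext fun p => ?_
  induction p using Polynomial.induction_on' with
  | add p q hp hq => simp [map_add, hp, hq]
  | monomial n a =>
      rw [← smul_X_eq_monomial, map_smul, map_smul, hpow]
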